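/- Let T be a tree on n vertices with a perfect matching given by the edge set M, with n ≥ 4, let f be a strong graceful labelling of T, and let v₀, v₁, v₂, v₃ be a path in T with f(v₀) = 0, f(v₁) = n − 1, f(v₂) = 1, f(v₃) = n − 2, v₀v₁ ∈ M and v₂v₃ ∈ M. Then there exist strong graceful labellings f₁, f₂, f₃ of T such that: (i) f₁(v₁) = 0, f₁(v₀) = n − 1, f₁(v₂) = n − 2, f₁(v₃) = 1; (ii) f₂(v₂) = 0, f₂(v₀) = 1, f₂(v₁) = n − 2, f₂(v₃) = n − 1; (iii) f₃(v₃) = 0, f₃(v₀) = n − 2, f₃(v₁) = 1, f₃(v₂) = n − 1. -/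
import Mathlib


open SimpleGraph

/-- A graceful labelling of a graph `G` with `m` edges: an injective function
`f` from the vertices into `{0, 1, …, m}` such that the induced edge labels
`|f u − f v|` are pairwise distinct over the edges. -/
def IsGracefulLabeling {V : Type} (G : SimpleGraph V) (f : V → ℕ) : Prop :=
  Function.Injective f ∧ (∀ v, f v ≤ G.edgeSet.ncard) ∧
  ∀ u v x y : V, G.Adj u v → G.Adj x y →
    Nat.dist (f u) (f v) = Nat.dist (f x) (f y) → s(u, v) = s(x, y)

/-- A strong graceful labelling of `G` on `n` vertices with respect to a matching `M`:
a graceful labelling such that `f x + f y = n - 1` for every edge `xy ∈ M`. -/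
def IsStrongGracefulLabeling {V : Type} [Fintype V] (G : SimpleGraph V)
    (M : G.Subgraph) (f : V → ℕ) : Prop :=
  IsGracefulLabeling G f ∧ ∀ x y : V, M.Adj x y → f x + f y = Fintype.card V - 1

/-- The complement of a strong graceful labelling is a strong graceful labelling. -/
lemma compl_isStrongGracefulLabeling {V : Type} [Fintype V] {G : SimpleGraph V}
    {M : G.Subgraph} (hm : G.edgeSet.ncard + 1 = Fintype.card V)
    (f : V → ℕ) (hf : IsStrongGracefulLabeling G M f) :
    IsStrongGracefulLabeling G M (fun x => Fintype.card V - 1 - f x) := by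
  obtain ⟨⟨hinj, hbd, hgr⟩, hstr⟩ := hf
  have hbd' : ∀ v, f v ≤ Fintype.card V - 1 := fun v => by have := hbd v; omega
  refine ⟨⟨?_, ?_, ?_⟩, ?_⟩
  · intro a b h
    simp only at h
    have ha := hbd' a; have hb := hbd' b
    exact hinj (by omega)
  · intro v
    show Fintype.card V - 1 - f v ≤ G.edgeSet.ncard
    have := hbd v; omega
  · intro u v x y hu hx hd
    apply hgr u v x y hu hx
    have h1 := hbd' u; have h2 := hbd' v; have h3 := hbd' x; have h4 := hbd' y
    simp only [Nat.dist] at hd ⊢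
    omega
  · intro x y hxy
    show Fintype.card V - 1 - f x + (Fintype.card V - 1 - f y) = Fintype.card V - 1
    have := hstr x y hxy
    have h1 := hbd' x; have h2 := hbd' y
    omega

/-- Given a strong graceful labelling `f` of a tree `T` on `n ≥ 4` vertices with perfect
matching `M` and a path `v₀, v₁, v₂, v₃` with `f v₀ = 0`, `f v₁ = n-1`, `f v₂ = 1`,
`f v₃ = n-2`, `v₀v₁ ∈ M`, `v₂v₃ ∈ M`, there are strong graceful labellings `f₁, f₂, f₃`
with the prescribed values on `v₀, v₁, v₂, v₃`. -/
theorem exists_three_relabellings {V : Type} [Fintype V] (G : SimpleGraph V)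
    (hT : G.IsTree) (hcard : 4 ≤ Fintype.card V)
    (M : G.Subgraph) (hM : M.IsPerfectMatching)
    (f : V → ℕ) (hf : IsStrongGracefulLabeling G M f)
    (v₀ v₁ v₂ v₃ : V)
    (h01 : G.Adj v₀ v₁) (h12 : G.Adj v₁ v₂) (h23 : G.Adj v₂ v₃)
    (hM01 : M.Adj v₀ v₁) (hM23 : M.Adj v₂ v₃)
    (h0 : f v₀ = 0) (h1 : f v₁ = Fintype.card V - 1)
    (h2 : f v₂ = 1) (h3 : f v₃ = Fintype.card V - 2) :
    (∃ f₁ : V → ℕ, IsStrongGracefulLabeling G M f₁ ∧ f₁ v₁ = 0 ∧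
      f₁ v₀ = Fintype.card V - 1 ∧ f₁ v₂ = Fintype.card V - 2 ∧ f₁ v₃ = 1) ∧
    (∃ f₂ : V → ℕ, IsStrongGracefulLabeling G M f₂ ∧ f₂ v₂ = 0 ∧
      f₂ v₀ = 1 ∧ f₂ v₁ = Fintype.card V - 2 ∧ f₂ v₃ = Fintype.card V - 1) ∧
    (∃ f₃ : V → ℕ, IsStrongGracefulLabeling G M f₃ ∧ f₃ v₃ = 0 ∧
      f₃ v₀ = Fintype.card V - 2 ∧ f₃ v₁ = 1 ∧ f₃ v₂ = Fintype.card V - 1) := by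
  classical
  set n := Fintype.card V with hn
  have hm : G.edgeSet.ncard + 1 = n := by
    have : Fintype G.edgeSet := Fintype.ofFinite _
    rw [Set.ncard_eq_toFinset_card' G.edgeSet]
    have := hT.card_edgeFinset
    rwa [edgeFinset] at this
  have hEv : n % 2 = 0 := Nat.even_iff.1 hM.even_card
  obtain ⟨⟨hinj, hbd, hgr⟩, hstr⟩ := hf
  have hbd' : ∀ v, f v ≤ n - 1 := fun v => by have := hbd v; omega
  -- surjectivity of f onto {0, …, n-1}
  have hsurj : ∀ k, k ≤ n - 1 → ∃ v, f v = k := by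
    intro k hk
    have himg : (Finset.univ.image f) = Finset.range n := by
      apply Finset.eq_of_subset_of_card_le
      · intro a ha
        simp only [Finset.mem_image] at ha
        obtain ⟨v, -, rfl⟩ := ha
        simp only [Finset.mem_range]
        have := hbd' v; omega
      · rw [Finset.card_range, Finset.card_image_of_injective _ hinj, Finset.card_univ]
    have hk' : k ∈ Finset.range n := by simp only [Finset.mem_range]; omega
    rw [← himg] at hk'
    simpa using hk'
  have hMG : ∀ {x y : V}, M.Adj x y → G.Adj x y := fun h => M.adj_sub h
  have hMsum : ∀ {x y : V}, M.Adj x y → f x + f y = n - 1 := fun h => hstr _ _ h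
  -- every non-matching edge joins vertices with labels of the same parity
  have hpar : ∀ u v : V, G.Adj u v → ¬ M.Adj u v → f u % 2 = f v % 2 := by
    intro u v huv hnM
    by_contra hodd
    have hbu := hbd' u; have hbv := hbd' v
    obtain ⟨x, hx⟩ := hsurj ((n - 1 - Nat.dist (f u) (f v)) / 2) (by omega)
    obtain ⟨w, hw, -⟩ := hM.1 (hM.2 x)
    have hxw : f x + f w = n - 1 := hMsum hw
    have hdist : Nat.dist (f u) (f v) = Nat.dist (f x) (f w) := by
      simp only [Nat.dist] at hx ⊢
      omega
    rcases Sym2.eq_iff.1 (hgr u v x w huv (hMG hw) hdist) with ⟨rfl, rfl⟩ | ⟨rfl, rfl⟩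
    · exact hnM hw
    · exact hnM hw.symm
  -- the parity-swap relabelling f2
  set f2 : V → ℕ := fun x => if f x % 2 = 0 then f x + 1 else f x - 1 with hf2
  have hf2inj : Function.Injective f2 := by
    intro a b h
    apply hinj
    simp only [hf2] at h
    split_ifs at h <;> omega
  have hbd2 : ∀ v, f2 v ≤ n - 1 := by
    intro v
    have := hbd' v
    simp only [hf2]
    split_ifs <;> omega
  have hstr2 : ∀ x y : V, M.Adj x y → f2 x + f2 y = n - 1 := by
    intro x y h
    have := hMsum h
    have hx := hbd' x; have hy := hbd' y
    simp only [hf2]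
    split_ifs <;> omega
  have hsame : ∀ u v : V, f u % 2 = f v % 2 →
      Nat.dist (f2 u) (f2 v) = Nat.dist (f u) (f v) := by
    intro u v h
    simp only [hf2, Nat.dist]
    split_ifs <;> omega
  have hoddm : ∀ u v : V, M.Adj u v → Nat.dist (f2 u) (f2 v) % 2 = 1 := by
    intro u v h
    have := hstr2 u v h
    simp only [Nat.dist]
    omega
  have hevenn : ∀ u v : V, G.Adj u v → ¬ M.Adj u v →
      Nat.dist (f2 u) (f2 v) % 2 = 0 := by
    intro u v hG hnM
    have hp := hpar u v hG hnM
    rw [hsame u v hp]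
    simp only [Nat.dist]
    omega
  have hgr2 : ∀ u v x y : V, G.Adj u v → G.Adj x y →
      Nat.dist (f2 u) (f2 v) = Nat.dist (f2 x) (f2 y) → s(u, v) = s(x, y) := by
    intro u v x y huv hxy hd
    by_cases hA : M.Adj u v <;> by_cases hB : M.Adj x y
    · have e1 := hstr2 u v hA
      have e2 := hstr2 x y hB
      have hcases : (f2 u = f2 x ∧ f2 v = f2 y) ∨ (f2 u = f2 y ∧ f2 v = f2 x) := by
        simp only [Nat.dist] at hd
        omega
      rcases hcases with ⟨ha, hb⟩ | ⟨ha, hb⟩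
      · exact Sym2.eq_iff.2 (Or.inl ⟨hf2inj ha, hf2inj hb⟩)
      · exact Sym2.eq_iff.2 (Or.inr ⟨hf2inj ha, hf2inj hb⟩)
    · have := hoddm u v hA
      have := hevenn x y hxy hB
      omega
    · have := hevenn u v huv hA
      have := hoddm x y hB
      omega
    · apply hgr u v x y huv hxy
      rw [hsame u v (hpar u v huv hA), hsame x y (hpar x y hxy hB)] at hd
      exact hd
  have hsgl2 : IsStrongGracefulLabeling G M f2 :=
    ⟨⟨hf2inj, fun v => by have := hbd2 v; omega, hgr2⟩, hstr2⟩
  -- values of f2 on the path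
  have hv0 : f2 v₀ = 1 := by simp [hf2, h0]
  have hv2 : f2 v₂ = 0 := by simp [hf2, h2]
  have hv1 : f2 v₁ = n - 2 := by
    simp only [hf2, h1]; split_ifs <;> omega
  have hv3 : f2 v₃ = n - 1 := by
    simp only [hf2, h3]; split_ifs <;> omega
  refine ⟨⟨fun x => n - 1 - f x, compl_isStrongGracefulLabeling hm f ⟨⟨hinj, hbd, hgr⟩, hstr⟩,
      ?_, ?_, ?_, ?_⟩,
    ⟨f2, hsgl2, hv2, hv0, hv1, hv3⟩,
    ⟨fun x => n - 1 - f2 x, compl_isStrongGracefulLabeling hm f2 hsgl2, ?_, ?_, ?_, ?_⟩⟩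
  · simp only [h1]; omega
  · simp only [h0]; omega
  · simp only [h2]; omega
  · simp only [h3]; omega
  · simp only [hv3]; omega
  · simp only [hv0]; omega
  · simp only [hv1]; omega
  · simp only [hv2]; omega
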